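/- For all real x and y, Im P(x + iy) = (y/9)·(9y⁴ − (90x² + 48√5·x + 38)y² + 45x⁴ + 48√5·x³ + 114x² + 24√5·x + 9). Moreover, for every real x < −√5/3, setting y = 2/3 − ((3+√5)/2)(x + √5/3), one has Im P(x + iy) < 0; that is, P maps ℓ₊ ∖ {c₊} into the open lower half-plane. -/
import Mathlib


open Complex

/-- The polynomial `P(z) = z (1 + (2√5/3) z + z²)²`. -/
noncomputable def P (z : ℂ) : ℂ :=
  z * (1 + ((2 * Real.sqrt 5 / 3 : ℝ) : ℂ) * z + z ^ 2) ^ 2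

lemma imP (x y : ℝ) : (P ((x : ℂ) + (y : ℂ) * I)).im =
      y / 9 * (9 * y ^ 4 - (90 * x ^ 2 + 48 * Real.sqrt 5 * x + 38) * y ^ 2
        + 45 * x ^ 4 + 48 * Real.sqrt 5 * x ^ 3 + 114 * x ^ 2
        + 24 * Real.sqrt 5 * x + 9) := by
  have hs : Real.sqrt 5 ^ 2 = 5 := Real.sq_sqrt (by norm_num)
  simp only [P]
  simp [Complex.add_im, Complex.add_re, Complex.mul_im, Complex.mul_re, pow_two,
    Complex.I_re, Complex.I_im, Complex.ofReal_re, Complex.ofReal_im, Complex.one_re,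
    Complex.one_im]
  linear_combination ((4/3) * x ^ 2 * y - (4/9) * y ^ 3) * hs

theorem stmt4 :
    (∀ x y : ℝ, (P ((x : ℂ) + (y : ℂ) * I)).im =
      y / 9 * (9 * y ^ 4 - (90 * x ^ 2 + 48 * Real.sqrt 5 * x + 38) * y ^ 2
        + 45 * x ^ 4 + 48 * Real.sqrt 5 * x ^ 3 + 114 * x ^ 2
        + 24 * Real.sqrt 5 * x + 9)) ∧
    (∀ x : ℝ, x < -Real.sqrt 5 / 3 →
      (P ((x : ℂ) +
        ((2 / 3 - (3 + Real.sqrt 5) / 2 * (x + Real.sqrt 5 / 3) : ℝ) : ℂ) * I)).im < 0) := by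
  refine ⟨imP, fun x hx => ?_⟩
  set s := Real.sqrt 5 with hsdef
  have hs : s ^ 2 = 5 := Real.sq_sqrt (by norm_num)
  have hs2 : 2 < s := by
    rw [hsdef]
    nlinarith [Real.sq_sqrt (show (0:ℝ) ≤ 5 by norm_num), Real.sqrt_nonneg 5]
  set t : ℝ := x + s / 3 with htdef
  have ht : t < 0 := by simp [htdef]; linarith
  set y : ℝ := 2 / 3 - (3 + s) / 2 * t with hydef
  rw [imP]
  have hy : 0 < y := by
    rw [hydef]; nlinarith
  have hfact : y / 9 * (9 * y ^ 4 - (90 * x ^ 2 + 48 * s * x + 38) * y ^ 2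
        + 45 * x ^ 4 + 48 * s * x ^ 3 + 114 * x ^ 2 + 24 * s * x + 9)
      = y / 9 * (t ^ 3 * ((54 - 6 * s) + (-(117 : ℝ)/2 - 81/2 * s) * t)) := by
    have hx' : x = t - s / 3 := by rw [htdef]; ring
    rw [hx', hydef]
    linear_combination ((22/243) - (22/243) * s ^ 2 - (59/54) * t + (53/162) * t * s
      + (11/54) * t * s ^ 2 + (11/162) * t * s ^ 3 + (37/27) * t ^ 2 + (4/9) * t ^ 2 * s
      - (5/27) * t ^ 2 * s ^ 2 + (3/4) * t ^ 3 - (37/36) * t ^ 3 * s - (3/4) * t ^ 3 * s ^ 2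
      - (1/12) * t ^ 3 * s ^ 3 + (55/24) * t ^ 4 + t ^ 4 * s + (1/24) * t ^ 4 * s ^ 2
      - (57/32) * t ^ 5 - (55/32) * t ^ 5 * s - (15/32) * t ^ 5 * s ^ 2
      - (1/32) * t ^ 5 * s ^ 3) * hs
  rw [hfact]
  have hb : 0 < (54 - 6 * s) + (-(117 : ℝ)/2 - 81/2 * s) * t := by nlinarith
  have ht3 : t ^ 3 < 0 := Odd.pow_neg ⟨1, by norm_num⟩ ht
  exact mul_neg_of_pos_of_neg (by positivity) (mul_neg_of_neg_of_pos ht3 hb)
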